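/- For every integer k ≥ 2, in the free Lie ring on k generators over ℤ, the ℤ-submodule spanned by the evaluations of all multilinear bracketings (complete binary bracketings of x_1,…,x_k in which each symbol occurs exactly once, in any order) is equal to the ℤ-submodule spanned by the evaluations of the elements of L(k). -/

import Mathlib

/-- Formal expressions: complete binary bracketings with leaves labeled by natural numbers. -/
inductive BTree : Type
  | leaf : ℕ → BTree
  | node : BTree → BTree → BTree
  deriving DecidableEq

namespace BTree

/-- The list of leaf labels, read from left to right. -/
def leaves : BTree → List ℕ
  | leaf i => [i]
  | node l r => leaves l ++ leaves r

/-- In every bracket `[u,v]`, the minimum index occurs inside `u`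
and the maximum index occurs inside `v`. -/
def valid : BTree → Prop
  | leaf _ => True
  | node l r => valid l ∧ valid r ∧
      (∃ a ∈ leaves l, ∀ i ∈ leaves l ++ leaves r, a ≤ i) ∧
      (∃ b ∈ leaves r, ∀ i ∈ leaves l ++ leaves r, i ≤ b)

/-- Membership in `L n`: the leaf labels are exactly `1, …, n`, each occurring
exactly once (in any order), and the min/max condition holds at every bracket. -/
def memL (n : ℕ) (t : BTree) : Prop :=
  (leaves t).Perm (List.range' 1 n) ∧ valid t

end BTree

namespace BTree

/-- Evaluation of a formal bracketing in the free Lie ring (free Lie algebra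
over `ℤ`) on generators indexed by `ℕ`: the symbol `x_i` is interpreted as the
generator of index `i` and each formal bracket as the Lie bracket. -/
noncomputable def ev : BTree → FreeLieAlgebra ℤ ℕ
  | leaf i => FreeLieAlgebra.of ℤ i
  | node l r => ⁅ev l, ev r⁆

end BTree

namespace BTree

lemma ev_node (l r : BTree) : ev (node l r) = ⁅ev l, ev r⁆ := rfl

lemma leaves_ne_nil : ∀ t : BTree, leaves t ≠ []
  | leaf i => by simp [leaves]
  | node l r => by simp [leaves, leaves_ne_nil l]

lemma exists_min_list : ∀ (l : List ℕ), l ≠ [] → ∃ a ∈ l, ∀ b ∈ l, a ≤ b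
  | [], h => absurd rfl h
  | [a], _ => ⟨a, by simp⟩
  | a :: b :: l, _ => by
    obtain ⟨m, hm, hmle⟩ := exists_min_list (b :: l) (by simp)
    rcases le_total a m with h | h
    · exact ⟨a, by simp, by intro c hc; rcases List.mem_cons.1 hc with rfl | hc; exacts [le_refl c, le_trans h (hmle c hc)]⟩
    · exact ⟨m, by simp [List.mem_cons_of_mem _ hm],
        by intro c hc; rcases List.mem_cons.1 hc with rfl | hc; exacts [h, hmle c hc]⟩

lemma exists_max_list : ∀ (l : List ℕ), l ≠ [] → ∃ a ∈ l, ∀ b ∈ l, b ≤ a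
  | [], h => absurd rfl h
  | [a], _ => ⟨a, by simp⟩
  | a :: b :: l, _ => by
    obtain ⟨m, hm, hmle⟩ := exists_max_list (b :: l) (by simp)
    rcases le_total m a with h | h
    · exact ⟨a, by simp, by intro c hc; rcases List.mem_cons.1 hc with rfl | hc; exacts [le_refl c, le_trans (hmle c hc) h]⟩
    · exact ⟨m, by simp [List.mem_cons_of_mem _ hm],
        by intro c hc; rcases List.mem_cons.1 hc with rfl | hc; exacts [h, hmle c hc]⟩

noncomputable def VSpan (S : List ℕ) : Submodule ℤ (FreeLieAlgebra ℤ ℕ) :=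
  Submodule.span ℤ (ev '' {t | (leaves t).Perm S ∧ valid t})

lemma VSpan_congr {S S' : List ℕ} (h : S.Perm S') : VSpan S = VSpan S' := by
  unfold VSpan
  congr 1
  ext x
  simp only [Set.mem_image, Set.mem_setOf_eq]
  constructor <;> rintro ⟨t, ⟨hp, hv⟩, rfl⟩
  exacts [⟨t, ⟨hp.trans h, hv⟩, rfl⟩, ⟨t, ⟨hp.trans h.symm, hv⟩, rfl⟩]

lemma mem_VSpan {S : List ℕ} {t : BTree} (hp : (leaves t).Perm S) (hv : valid t) :
    ev t ∈ VSpan S :=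
  Submodule.subset_span ⟨t, ⟨hp, hv⟩, rfl⟩

lemma lie_mem_span_left {x : FreeLieAlgebra ℤ ℕ} {A : Set (FreeLieAlgebra ℤ ℕ)}
    {p : Submodule ℤ (FreeLieAlgebra ℤ ℕ)}
    (h : ∀ a ∈ A, ⁅x, a⁆ ∈ p) {y} (hy : y ∈ Submodule.span ℤ A) : ⁅x, y⁆ ∈ p := by
  induction hy using Submodule.span_induction with
  | mem a ha => exact h a ha
  | zero => simp
  | add a b _ _ ha hb => rw [lie_add]; exact p.add_mem ha hb
  | smul c a _ ha => rw [lie_smul]; exact p.smul_mem c ha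

lemma lie_mem_span_right {x : FreeLieAlgebra ℤ ℕ} {A : Set (FreeLieAlgebra ℤ ℕ)}
    {p : Submodule ℤ (FreeLieAlgebra ℤ ℕ)}
    (h : ∀ a ∈ A, ⁅a, x⁆ ∈ p) {y} (hy : y ∈ Submodule.span ℤ A) : ⁅y, x⁆ ∈ p := by
  induction hy using Submodule.span_induction with
  | mem a ha => exact h a ha
  | zero => simp
  | add a b _ _ ha hb => rw [add_lie]; exact p.add_mem ha hb
  | smul c a _ ha => rw [smul_lie]; exact p.smul_mem c ha

lemma lie_ev_mem : ∀ n : ℕ, ∀ u v : BTree, valid u → valid v →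
    (leaves u ++ leaves v).Nodup →
    (leaves u ++ leaves v).length ≤ n →
    ⁅ev u, ev v⁆ ∈ VSpan (leaves u ++ leaves v) := by
  intro n
  induction n with
  | zero =>
    intro u v _ _ _ hlen
    exfalso
    have := leaves_ne_nil u
    simp [List.length_append, List.length_eq_zero_iff] at hlen
    exact this hlen.1
  | succ n IH =>
    intro u v hu hv hnd hlen
    have hSne : leaves u ++ leaves v ≠ [] := by
      simp [leaves_ne_nil u]
    obtain ⟨m, hmS, hmle⟩ := exists_min_list _ hSne
    obtain ⟨M, hMS, hMge⟩ := exists_max_list _ hSne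
    rcases List.mem_append.1 hmS with hmu | hmv
    · rcases List.mem_append.1 hMS with hMu | hMv
      · -- case 3 : m, M ∈ u
        rcases u with i | ⟨a, b⟩
        · -- u is a leaf : contradiction
          exfalso
          simp only [leaves, List.mem_singleton] at hmu hMu
          obtain ⟨j, hj⟩ := List.exists_mem_of_ne_nil _ (leaves_ne_nil v)
          have h1 : m ≤ j := hmle j (List.mem_append_right _ hj)
          have h2 : j ≤ M := hMge j (List.mem_append_right _ hj)
          have hji : j = i := by omega
          rw [List.nodup_append] at hnd
          exact hnd.2.2 i (show i ∈ leaves (leaf i) by simp [leaves]) i (hji ▸ hj) rfl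
        · obtain ⟨ha, hb, ⟨a0, ha0, ha0le⟩, ⟨b0, hb0, hb0ge⟩⟩ := hu
          have hma : m ∈ leaves a := by
            have h1 : a0 ≤ m := ha0le m hmu
            have h2 : m ≤ a0 := hmle a0 (List.mem_append_left _ (List.mem_append_left _ ha0))
            have : m = a0 := le_antisymm h2 h1
            rwa [this]
          have hMb : M ∈ leaves b := by
            have h1 : M ≤ b0 := hb0ge M hMu
            have h2 : b0 ≤ M := hMge b0 (List.mem_append_left _ (List.mem_append_right _ hb0))
            have : M = b0 := le_antisymm h1 h2
            rwa [this]
          have hS : leaves (node a b) ++ leaves v = (leaves a ++ leaves b) ++ leaves v := rfl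
          -- sizes
          have hla : 0 < (leaves a).length := List.length_pos_iff.2 (leaves_ne_nil a)
          have hlb : 0 < (leaves b).length := List.length_pos_iff.2 (leaves_ne_nil b)
          have hlenS : (leaves a).length + ((leaves b).length + (leaves v).length) ≤ n + 1 := by
            simpa [hS, List.length_append] using hlen
          -- nodup facts
          have hndS : ((leaves a ++ leaves b) ++ leaves v).Nodup := by rwa [hS] at hnd
          have hndbv : (leaves b ++ leaves v).Nodup := by
            refine List.Nodup.sublist ?_ hndS
            rw [List.append_assoc]
            exact List.sublist_append_right _ _
          have hndav : (leaves a ++ leaves v).Nodup := by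
            refine List.Nodup.sublist ?_ hndS
            exact (List.sublist_append_left _ _).append (List.Sublist.refl _)
          have hbv : ⁅ev b, ev v⁆ ∈ VSpan (leaves b ++ leaves v) := by
            refine IH b v hb hv hndbv ?_
            simp only [List.length_append]; omega
          have hav : ⁅ev a, ev v⁆ ∈ VSpan (leaves a ++ leaves v) := by
            refine IH a v ha hv hndav ?_
            simp only [List.length_append]; omega
          rw [hS]
          have ht1 : ⁅ev a, ⁅ev b, ev v⁆⁆ ∈ VSpan ((leaves a ++ leaves b) ++ leaves v) := by
            refine lie_mem_span_left ?_ hbv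
            rintro x ⟨w, ⟨hwp, hwv⟩, rfl⟩
            rw [← ev_node]
            have hperm : (leaves (node a w)).Perm ((leaves a ++ leaves b) ++ leaves v) := by
              show (leaves a ++ leaves w).Perm _
              rw [List.append_assoc]
              exact (hwp.append_left (leaves a))
            refine mem_VSpan hperm ⟨ha, hwv, ⟨m, hma, ?_⟩, ⟨M, ?_, ?_⟩⟩
            · intro i hi
              exact hmle i (by rw [hS]; exact hperm.mem_iff.1 hi)
            · exact hwp.mem_iff.2 (List.mem_append_left _ hMb)
            · intro i hi
              exact hMge i (by rw [hS]; exact hperm.mem_iff.1 hi)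
          have ht2 : ⁅ev b, ⁅ev a, ev v⁆⁆ ∈ VSpan ((leaves a ++ leaves b) ++ leaves v) := by
            refine lie_mem_span_left ?_ hav
            rintro x ⟨w, ⟨hwp, hwv⟩, rfl⟩
            rw [← lie_skew]
            refine Submodule.neg_mem _ ?_
            rw [← ev_node]
            have hperm : (leaves (node w b)).Perm ((leaves a ++ leaves b) ++ leaves v) := by
              show (leaves w ++ leaves b).Perm _
              refine (hwp.append_right (leaves b)).trans ?_
              rw [List.append_assoc, List.append_assoc]
              exact (List.perm_append_comm).append_left (leaves a)
            refine mem_VSpan hperm ⟨hwv, hb, ⟨m, hwp.mem_iff.2 (List.mem_append_left _ hma), ?_⟩,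
              ⟨M, hMb, ?_⟩⟩
            · intro i hi
              exact hmle i (by rw [hS]; exact hperm.mem_iff.1 hi)
            · intro i hi
              exact hMge i (by rw [hS]; exact hperm.mem_iff.1 hi)
          have hjac : ⁅ev (node a b), ev v⁆ =
              ⁅ev a, ⁅ev b, ev v⁆⁆ - ⁅ev b, ⁅ev a, ev v⁆⁆ := by
            rw [ev_node]; exact lie_lie _ _ _
          rw [hjac]
          exact Submodule.sub_mem _ ht1 ht2
      · -- case 1 : m ∈ u, M ∈ v
        rw [← ev_node]
        exact mem_VSpan (List.Perm.refl _) ⟨hu, hv, ⟨m, hmu, hmle⟩, ⟨M, hMv, hMge⟩⟩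
    · rcases List.mem_append.1 hMS with hMu | hMv
      · -- case 2 : m ∈ v, M ∈ u
        rw [← lie_skew]
        refine Submodule.neg_mem _ ?_
        rw [← ev_node]
        have hperm : (leaves (node v u)).Perm (leaves u ++ leaves v) := by
          show (leaves v ++ leaves u).Perm _
          exact List.perm_append_comm
        refine mem_VSpan hperm ⟨hv, hu, ⟨m, hmv, ?_⟩, ⟨M, hMu, ?_⟩⟩
        · intro i hi; exact hmle i (hperm.mem_iff.1 hi)
        · intro i hi; exact hMge i (hperm.mem_iff.1 hi)
      · -- case 4 : m, M ∈ v
        rcases v with i | ⟨a, b⟩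
        · exfalso
          simp only [leaves, List.mem_singleton] at hmv hMv
          obtain ⟨j, hj⟩ := List.exists_mem_of_ne_nil _ (leaves_ne_nil u)
          have h1 : m ≤ j := hmle j (List.mem_append_left _ hj)
          have h2 : j ≤ M := hMge j (List.mem_append_left _ hj)
          have hji : j = i := by omega
          rw [List.nodup_append] at hnd
          exact hnd.2.2 i (hji ▸ hj) i (show i ∈ leaves (leaf i) by simp [leaves]) rfl
        · obtain ⟨ha, hb, ⟨a0, ha0, ha0le⟩, ⟨b0, hb0, hb0ge⟩⟩ := hv
          have hma : m ∈ leaves a := by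
            have h1 : a0 ≤ m := ha0le m hmv
            have h2 : m ≤ a0 := hmle a0 (List.mem_append_right _ (List.mem_append_left _ ha0))
            have : m = a0 := le_antisymm h2 h1
            rwa [this]
          have hMb : M ∈ leaves b := by
            have h1 : M ≤ b0 := hb0ge M hMv
            have h2 : b0 ≤ M := hMge b0 (List.mem_append_right _ (List.mem_append_right _ hb0))
            have : M = b0 := le_antisymm h1 h2
            rwa [this]
          have hS : leaves u ++ leaves (node a b) = leaves u ++ (leaves a ++ leaves b) := rfl
          have hla : 0 < (leaves a).length := List.length_pos_iff.2 (leaves_ne_nil a)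
          have hlb : 0 < (leaves b).length := List.length_pos_iff.2 (leaves_ne_nil b)
          have hlenS : (leaves u).length + ((leaves a).length + (leaves b).length) ≤ n + 1 := by
            simpa [hS, List.length_append] using hlen
          have hndS : (leaves u ++ (leaves a ++ leaves b)).Nodup := by rwa [hS] at hnd
          have hndua : (leaves u ++ leaves a).Nodup := by
            refine List.Nodup.sublist ?_ hndS
            exact (List.Sublist.refl _).append (List.sublist_append_left _ _)
          have hndub : (leaves u ++ leaves b).Nodup := by
            refine List.Nodup.sublist ?_ hndS
            exact (List.Sublist.refl _).append (List.sublist_append_right _ _)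
          have hua : ⁅ev u, ev a⁆ ∈ VSpan (leaves u ++ leaves a) := by
            refine IH u a hu ha hndua ?_
            simp only [List.length_append]; omega
          have hub : ⁅ev u, ev b⁆ ∈ VSpan (leaves u ++ leaves b) := by
            refine IH u b hu hb hndub ?_
            simp only [List.length_append]; omega
          rw [hS]
          have ht1 : ⁅⁅ev u, ev a⁆, ev b⁆ ∈ VSpan (leaves u ++ (leaves a ++ leaves b)) := by
            refine lie_mem_span_right ?_ hua
            rintro x ⟨w, ⟨hwp, hwv⟩, rfl⟩
            rw [← ev_node]
            have hperm : (leaves (node w b)).Perm (leaves u ++ (leaves a ++ leaves b)) := by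
              show (leaves w ++ leaves b).Perm _
              refine (hwp.append_right (leaves b)).trans ?_
              rw [List.append_assoc]
            refine mem_VSpan hperm ⟨hwv, hb,
              ⟨m, hwp.mem_iff.2 (List.mem_append_right _ hma), ?_⟩, ⟨M, hMb, ?_⟩⟩
            · intro i hi; exact hmle i (by rw [hS]; exact hperm.mem_iff.1 hi)
            · intro i hi; exact hMge i (by rw [hS]; exact hperm.mem_iff.1 hi)
          have ht2 : ⁅ev a, ⁅ev u, ev b⁆⁆ ∈ VSpan (leaves u ++ (leaves a ++ leaves b)) := by
            refine lie_mem_span_left ?_ hub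
            rintro x ⟨w, ⟨hwp, hwv⟩, rfl⟩
            rw [← ev_node]
            have hperm : (leaves (node a w)).Perm (leaves u ++ (leaves a ++ leaves b)) := by
              show (leaves a ++ leaves w).Perm _
              refine (hwp.append_left (leaves a)).trans ?_
              rw [← List.append_assoc, ← List.append_assoc]
              exact (List.perm_append_comm).append_right (leaves b)
            refine mem_VSpan hperm ⟨ha, hwv, ⟨m, hma, ?_⟩,
              ⟨M, hwp.mem_iff.2 (List.mem_append_right _ hMb), ?_⟩⟩
            · intro i hi; exact hmle i (by rw [hS]; exact hperm.mem_iff.1 hi)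
            · intro i hi; exact hMge i (by rw [hS]; exact hperm.mem_iff.1 hi)
          have hjac : ⁅ev u, ev (node a b)⁆ =
              ⁅⁅ev u, ev a⁆, ev b⁆ + ⁅ev a, ⁅ev u, ev b⁆⁆ := by
            rw [ev_node]; exact leibniz_lie _ _ _
          rw [hjac]
          exact Submodule.add_mem _ ht1 ht2

lemma ev_mem_VSpan : ∀ t : BTree, (leaves t).Nodup → ev t ∈ VSpan (leaves t) := by
  intro t
  induction t with
  | leaf i => intro _; exact mem_VSpan (List.Perm.refl _) trivial
  | node l r ihl ihr =>
    intro hnd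
    have hS : leaves (node l r) = leaves l ++ leaves r := rfl
    rw [hS] at hnd ⊢
    have hndl : (leaves l).Nodup := (List.nodup_append.1 hnd).1
    have hndr : (leaves r).Nodup := (List.nodup_append.1 hnd).2.1
    rw [ev_node]
    have hl := ihl hndl
    have hr := ihr hndr
    refine lie_mem_span_left ?_ hr
    rintro x ⟨w, ⟨hwp, hwv⟩, rfl⟩
    refine lie_mem_span_right ?_ hl
    rintro y ⟨w', ⟨hwp', hwv'⟩, rfl⟩
    have hperm : (leaves w' ++ leaves w).Perm (leaves l ++ leaves r) :=
      hwp'.append hwp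
    have := lie_ev_mem (leaves w' ++ leaves w).length w' w hwv' hwv
      (hperm.nodup_iff.2 hnd) le_rfl
    rwa [VSpan_congr hperm] at this

end BTree

/-- For every `k ≥ 2`, the `ℤ`-span of the evaluations of all multilinear
bracketings of `x_1, …, x_k` (each symbol occurring exactly once, in any order)
equals the `ℤ`-span of the evaluations of the elements of `L(k)`. -/
theorem span_multilinear_eq_span_L (k : ℕ) (hk : 2 ≤ k) :
    Submodule.span ℤ (BTree.ev '' {t : BTree | (BTree.leaves t).Perm (List.range' 1 k)}) =
    Submodule.span ℤ (BTree.ev '' {t : BTree | BTree.memL k t}) := by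
  apply le_antisymm
  · rw [Submodule.span_le]
    rintro x ⟨t, ht, rfl⟩
    have hnd : (BTree.leaves t).Nodup :=
      ht.nodup_iff.2 (List.nodup_range' 1)
    have := BTree.ev_mem_VSpan t hnd
    rw [BTree.VSpan_congr ht] at this
    have hset : BTree.VSpan (List.range' 1 k) =
        Submodule.span ℤ (BTree.ev '' {t : BTree | BTree.memL k t}) := rfl
    rw [hset] at this
    exact this
  · apply Submodule.span_mono
    apply Set.image_mono
    intro t ht
    exact ht.1
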